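/- For any n ≥ 5, the product (r_n r_{n-1} r_{n-2} r_{n-1})^2 equals the identity permutation of {1,...,n}; hence the Big-3 cubic Pancake graph Cay(Sym_n, {r_{n-2}, r_{n-1}, r_n}) contains a cycle of length 8. -/

import Mathlib

def pancakeRev (n m : ℕ) : Equiv.Perm (Fin n) :=
  Function.Involutive.toPerm
    (fun a => if h : a.val < m ∧ m ≤ n then ⟨m - 1 - a.val, by omega⟩ else a)
    (by
      intro a
      beta_reduce
      by_cases h : a.val < m ∧ m ≤ n
      · rw [dif_pos h]
        have h2 : m - 1 - a.val < m ∧ m ≤ n := by omega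
        rw [dif_pos h2]
        apply Fin.ext
        simp
        omega
      · rw [dif_neg h, dif_neg h])

lemma pancakeRev_val (n m : ℕ) (a : Fin n) :
    (pancakeRev n m a).val = if a.val < m ∧ m ≤ n then m - 1 - a.val else a.val := by
  simp only [pancakeRev, Function.Involutive.coe_toPerm]
  split_ifs with h
  · simp only [Function.Involutive.toPerm, Equiv.coe_fn_mk, dif_pos h]
  · simp only [Function.Involutive.toPerm, Equiv.coe_fn_mk, dif_neg h]

lemma pancake_key (n : ℕ) (hn : 5 ≤ n) (a : Fin n) :
    ((pancakeRev n n * pancakeRev n (n - 1) * pancakeRev n (n - 2) * pancakeRev n (n - 1))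
        a).val = if a.val = 0 then n - 1 else if a.val = n - 1 then 0 else a.val := by
  have ha := a.isLt
  simp only [Equiv.Perm.mul_apply]
  set b := pancakeRev n (n - 1) a with hb
  have h1 : b.val = if a.val < n - 1 then n - 2 - a.val else a.val := by
    rw [hb, pancakeRev_val]; split_ifs <;> omega
  set c := pancakeRev n (n - 2) b with hc
  have h2 : c.val = if b.val < n - 2 then n - 3 - b.val else b.val := by
    rw [hc, pancakeRev_val]; split_ifs <;> omega
  set d := pancakeRev n (n - 1) c with hd
  have h3 : d.val = if c.val < n - 1 then n - 2 - c.val else c.val := by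
    rw [hd, pancakeRev_val]; split_ifs <;> omega
  have h4 : (pancakeRev n n d).val = n - 1 - d.val := by
    rw [pancakeRev_val]
    have := d.isLt
    split_ifs <;> omega
  rw [h4, h3, h2, h1]
  split_ifs <;> omega

theorem pancake_C8_BS2 (n : ℕ) (hn : 5 ≤ n) :
    (pancakeRev n n * pancakeRev n (n - 1) * pancakeRev n (n - 2) * pancakeRev n (n - 1)) ^ 2 =
      1 := by
  ext a
  rw [pow_two]
  simp only [Equiv.Perm.mul_apply, Equiv.Perm.coe_one, id]
  have ha := a.isLt
  have h1 := pancake_key n hn a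
  have h2 := pancake_key n hn
    ((pancakeRev n n * pancakeRev n (n - 1) * pancakeRev n (n - 2) * pancakeRev n (n - 1)) a)
  simp only [Equiv.Perm.mul_apply] at h1 h2
  simp only [h1] at h2
  rw [h2]
  split_ifs <;> omega
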